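/- Let ρ ∈ (0,1) and R > 1, and let φ be holomorphic on the open disk of radius R with φ(0) = 0, φ(1) = 1, and |Im φ(z)| < ρ for all |z| < R. Then π/(2ρ) ≤ log((R+1)/(R−1)). -/

import Mathlib

open Complex Metric

lemma normSq_cosh_sub_normSq_sinh (z : ℂ) :
    Complex.normSq (Complex.cosh z) - Complex.normSq (Complex.sinh z)
      = Real.cos (2 * z.im) := by
  have hab : Complex.exp z * (starRingEnd ℂ) (Complex.exp (-z))
      = Complex.exp (((2 * z.im : ℝ) : ℂ) * I) := by
    rw [← Complex.exp_conj, ← Complex.exp_add]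
    congr 1
    rw [map_neg, ← sub_eq_add_neg, Complex.sub_conj]
  rw [Complex.cosh, Complex.sinh]
  have e2 : (2 : ℂ) ≠ 0 := two_ne_zero
  rw [Complex.normSq_div, Complex.normSq_div, Complex.normSq_add, Complex.normSq_sub, hab]
  rw [Complex.exp_ofReal_mul_I_re]
  have : Complex.normSq 2 = 4 := by norm_num [Complex.normSq_apply]
  rw [this]
  ring

lemma abs_tanh_lt_one {z : ℂ} (h : |z.im| < Real.pi / 4) :
    ‖Complex.tanh z‖ < 1 := by
  have hcos : 0 < Real.cos (2 * z.im) := by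
    apply Real.cos_pos_of_mem_Ioo
    constructor
    · nlinarith [abs_lt.mp h |>.1]
    · nlinarith [abs_lt.mp h |>.2]
  have hlt : Complex.normSq (Complex.sinh z) < Complex.normSq (Complex.cosh z) := by
    have := normSq_cosh_sub_normSq_sinh z
    linarith
  have habs : ‖Complex.sinh z‖ < ‖Complex.cosh z‖ := by
    have h1 : ‖Complex.sinh z‖ ^ 2 < ‖Complex.cosh z‖ ^ 2 := by
      rwa [Complex.sq_norm, Complex.sq_norm]
    exact lt_of_pow_lt_pow_left₀ 2 (norm_nonneg _) h1
  have hcne : Complex.cosh z ≠ 0 := by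
    intro h0
    rw [h0, norm_zero] at habs
    exact absurd habs (not_lt.mpr (norm_nonneg _))
  rw [Complex.tanh_eq_sinh_div_cosh, norm_div, div_lt_one]
  · exact habs
  · exact (norm_pos_iff.mpr hcne)

lemma cosh_ne_zero_of_im {z : ℂ} (h : |z.im| < Real.pi / 4) : Complex.cosh z ≠ 0 := by
  intro h0
  have := abs_tanh_lt_one h
  -- derive contradiction via normSq inequality instead
  have hcos : 0 < Real.cos (2 * z.im) := by
    apply Real.cos_pos_of_mem_Ioo
    constructor
    · nlinarith [abs_lt.mp h |>.1]
    · nlinarith [abs_lt.mp h |>.2]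
  have hlt := normSq_cosh_sub_normSq_sinh z
  rw [h0, map_zero] at hlt
  nlinarith [Complex.normSq_nonneg (Complex.sinh z)]

theorem disk_to_strip_limitation (φ : ℂ → ℂ) (ρ R : ℝ)
    (hρ0 : 0 < ρ) (hρ1 : ρ < 1) (hR : 1 < R)
    (hφ : DifferentiableOn ℂ φ (Metric.ball (0 : ℂ) R))
    (h0 : φ 0 = 0) (h1 : φ 1 = 1)
    (him : ∀ z ∈ Metric.ball (0 : ℂ) R, |(φ z).im| < ρ) :
    Real.pi / (2 * ρ) ≤ Real.log ((R + 1) / (R - 1)) := by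
  set t : ℝ := Real.pi / (4 * ρ) with ht
  have hπ : 0 < Real.pi := Real.pi_pos
  have ht0 : 0 < t := by positivity
  set f : ℂ → ℂ := fun z => Complex.tanh ((t : ℂ) * φ z) with hf
  have him' : ∀ z ∈ Metric.ball (0 : ℂ) R, |((t : ℂ) * φ z).im| < Real.pi / 4 := by
    intro z hz
    have : ((t : ℂ) * φ z).im = t * (φ z).im := by simp
    rw [this, abs_mul, abs_of_pos ht0]
    have := him z hz
    calc t * |(φ z).im| < t * ρ := by exact (mul_lt_mul_iff_right₀ ht0).mpr this
    _ = Real.pi / 4 := by rw [ht]; field_simp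
  have hdiff : DifferentiableOn ℂ f (Metric.ball (0 : ℂ) R) := by
    intro z hz
    have hzo : DifferentiableAt ℂ φ z :=
      (hφ z hz).differentiableAt (Metric.isOpen_ball.mem_nhds hz)
    have hcne : Complex.cosh ((t : ℂ) * φ z) ≠ 0 := cosh_ne_zero_of_im (him' z hz)
    have : DifferentiableAt ℂ f z := by
      have hmul : DifferentiableAt ℂ (fun w => (t : ℂ) * φ w) z :=
        (differentiableAt_const _).mul hzo
      have htanh : DifferentiableAt ℂ Complex.tanh ((t : ℂ) * φ z) := by
        have : Complex.tanh = fun w => Complex.sinh w / Complex.cosh w := by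
          funext w; exact Complex.tanh_eq_sinh_div_cosh w
        rw [this]
        exact (Complex.differentiable_sinh _).div (Complex.differentiable_cosh _) hcne
      exact htanh.comp z hmul
    exact this.differentiableWithinAt
  have hf0 : f 0 = 0 := by simp [hf, h0]
  have hmaps : Set.MapsTo f (Metric.ball (0 : ℂ) R) (Metric.ball (f 0) 1) := by
    intro z hz
    rw [hf0, Metric.mem_ball, dist_zero_right]
    exact abs_tanh_lt_one (him' z hz)
  have h1ball : (1 : ℂ) ∈ Metric.ball (0 : ℂ) R := by
    simp [Metric.mem_ball]; exact hR
  have hschwarz := Complex.dist_le_div_mul_dist_of_mapsTo_ball hdiff (hmaps.mono_right Metric.ball_subset_closedBall) h1ball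
  rw [hf0, dist_zero_right, dist_zero_right] at hschwarz
  have hf1 : f 1 = ((Real.tanh t : ℝ) : ℂ) := by
    simp only [hf, h1, mul_one, Complex.ofReal_tanh]
  rw [hf1] at hschwarz
  simp only [Complex.norm_real, norm_one, mul_one, Real.norm_eq_abs] at hschwarz
  have htanh_le : Real.tanh t ≤ 1 / R := le_trans (le_abs_self _) hschwarz
  -- from tanh t ≤ 1/R derive exp (2t) ≤ (R+1)/(R-1)
  have hR1 : 0 < R - 1 := by linarith
  have hR0 : 0 < R := by linarith
  have he : Real.exp (2 * t) ≤ (R + 1) / (R - 1) := by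
    have htanh : Real.tanh t = (Real.exp t - Real.exp (-t)) / (Real.exp t + Real.exp (-t)) := by
      rw [Real.tanh_eq_sinh_div_cosh, Real.sinh_eq, Real.cosh_eq]
      field_simp
    rw [htanh] at htanh_le
    have hd : 0 < Real.exp t + Real.exp (-t) := by positivity
    rw [div_le_div_iff₀ hd hR0] at htanh_le
    rw [le_div_iff₀ hR1]
    have hexp : Real.exp (2 * t) = Real.exp t * Real.exp t := by
      rw [← Real.exp_add]; ring_nf
    have hne : Real.exp (-t) * Real.exp t = 1 := by
      rw [← Real.exp_add]; simp
    nlinarith [Real.exp_pos t, Real.exp_pos (-t)]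
  have hlog : 2 * t ≤ Real.log ((R + 1) / (R - 1)) := by
    have := Real.log_le_log (Real.exp_pos (2 * t)) he
    rwa [Real.log_exp] at this
  have : Real.pi / (2 * ρ) = 2 * t := by rw [ht]; field_simp; ring
  linarith
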